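/- Let σ be a finite nonnegative measure with infinite support contained in [-1,α] ∪ [β,1] where α < 0 < β, and let P̂_j be the monic orthogonal polynomials with respect to σ. If neither 0 nor any point of a fixed closed interval [-δ, δ] ⊂ (α, β) contains zeros of P̂_{j_k} for a subsequence (j_k), then the sequence (P̂_{j_k+1}(0)/P̂_{j_k}(0))_k is bounded. -/

import Mathlib

open MeasureTheory Polynomial
set_option linter.unusedSectionVars false
set_option maxHeartbeats 1000000

namespace RatioAux

/-! ### Pure polynomial lemmas -/

lemma multiset_prod_neg (s : Multiset ℝ) (hs : ∀ x ∈ s, x < 0) :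
    (Even (Multiset.card s) → 0 < s.prod) ∧ (Odd (Multiset.card s) → s.prod < 0) := by
  induction s using Multiset.induction_on with
  | empty => simp
  | cons a s IH =>
    have ha : a < 0 := hs a (Multiset.mem_cons_self a s)
    have IH' := IH (fun x hx => hs x (Multiset.mem_cons_of_mem hx))
    constructor
    · intro he
      rw [Multiset.card_cons, Nat.even_add_one] at he
      have := IH'.2 (Nat.not_even_iff_odd.1 he)
      rw [Multiset.prod_cons]
      exact mul_pos_of_neg_of_neg ha this
    · intro ho
      rw [Multiset.card_cons, Nat.odd_add_one] at ho
      have := IH'.1 (Nat.not_odd_iff_even.1 ho)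
      rw [Multiset.prod_cons]
      exact mul_neg_of_neg_of_pos ha this

lemma exists_odd_root (f : Polynomial ℝ) (a b : ℝ) (hab : a < b)
    (hsign : f.eval a * f.eval b < 0) :
    ∃ c ∈ Set.Ioo a b, Odd (f.rootMultiplicity c) := by
  classical
  have hf : f ≠ 0 := by rintro rfl; simp at hsign
  have hfa : f.eval a ≠ 0 := fun h => by simp [h] at hsign
  have hfb : f.eval b ≠ 0 := fun h => by simp [h] at hsign
  set T : Multiset ℝ := f.roots.filter (fun c => c ∈ Set.Ioo a b) with hT
  have hTle : T ≤ f.roots := Multiset.filter_le _ _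
  have hdvd : (T.map (fun c => X - C c)).prod ∣ f :=
    dvd_trans (Multiset.prod_dvd_prod_of_le (Multiset.map_le_map hTle))
      (prod_multiset_X_sub_C_dvd f)
  obtain ⟨g, hg⟩ := hdvd
  set W : Polynomial ℝ := (T.map (fun c => X - C c)).prod with hW
  have hg0 : g ≠ 0 := by rintro rfl; rw [mul_zero] at hg; exact hf hg
  have hW0 : W ≠ 0 := by rintro h; rw [h, zero_mul] at hg; exact hf hg
  have hWroots : W.roots = T := roots_multiset_prod_X_sub_C T
  have hgroots : ∀ c ∈ Set.Icc a b, g.eval c ≠ 0 := by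
    intro c hc hgc
    have hfc : f.eval c = 0 := by rw [hg, eval_mul, hgc, mul_zero]
    have hca : c ≠ a := fun h => hfa (h ▸ hfc)
    have hcb : c ≠ b := fun h => hfb (h ▸ hfc)
    have hcIoo : c ∈ Set.Ioo a b := ⟨lt_of_le_of_ne hc.1 (Ne.symm hca), lt_of_le_of_ne hc.2 hcb⟩
    have hcount : T.count c = f.roots.count c := by
      rw [hT, Multiset.count_filter, if_pos hcIoo]
    have hmul : f.roots = W.roots + g.roots := by
      rw [hg, roots_mul (hg ▸ hf)]
    have : f.roots.count c = T.count c + g.roots.count c := by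
      rw [hmul, Multiset.count_add, hWroots]
    have hgc' : 1 ≤ g.roots.count c := by
      rw [Multiset.one_le_count_iff_mem, mem_roots hg0]
      exact hgc
    omega
  have hgab : 0 < g.eval a * g.eval b := by
    rcases lt_trichotomy (g.eval a * g.eval b) 0 with h | h | h
    · exfalso
      rcases mul_neg_iff.1 h with ⟨h1, h2⟩ | ⟨h1, h2⟩
      · obtain ⟨c, hc, hc0⟩ := intermediate_value_Ioo' hab.le
          (Continuous.continuousOn (g.continuous)) (Set.mem_Ioo.2 ⟨h2, h1⟩)
        exact hgroots c (Set.mem_Icc.2 ⟨hc.1.le, hc.2.le⟩) hc0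
      · obtain ⟨c, hc, hc0⟩ := intermediate_value_Ioo hab.le
          (Continuous.continuousOn (g.continuous)) (Set.mem_Ioo.2 ⟨h1, h2⟩)
        exact hgroots c (Set.mem_Icc.2 ⟨hc.1.le, hc.2.le⟩) hc0
    · exfalso
      rcases mul_eq_zero.1 h with h1 | h1
      · exact hgroots a (Set.mem_Icc.2 ⟨le_refl a, hab.le⟩) h1
      · exact hgroots b (Set.mem_Icc.2 ⟨hab.le, le_refl b⟩) h1
    · exact h
  have hWab : W.eval a * W.eval b = (T.map (fun c => (a - c) * (b - c))).prod := by
    rw [hW, eval_multiset_prod, eval_multiset_prod, Multiset.map_map, Multiset.map_map,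
      ← Multiset.prod_map_mul]
    congr 1
    apply Multiset.map_congr rfl
    intro c _
    simp
  have hWneg : W.eval a * W.eval b < 0 := by
    have : f.eval a * f.eval b = (W.eval a * W.eval b) * (g.eval a * g.eval b) := by
      rw [hg]; simp [eval_mul]; ring
    nlinarith
  have hodd : Odd (Multiset.card T) := by
    by_contra ho
    have heven : Even (Multiset.card T) := Nat.not_odd_iff_even.1 ho
    have hneg : ∀ x ∈ T.map (fun c => (a - c) * (b - c)), x < 0 := by
      intro x hx
      obtain ⟨c, hc, rfl⟩ := Multiset.mem_map.1 hx
      have hcIoo : c ∈ Set.Ioo a b := (Multiset.mem_filter.1 hc).2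
      exact mul_neg_of_neg_of_pos (by linarith [hcIoo.1]) (by linarith [hcIoo.2])
    have := (multiset_prod_neg _ hneg).1 (by rwa [Multiset.card_map])
    rw [← hWab] at this
    linarith
  have hsum : Multiset.card T = ∑ c ∈ T.toFinset, T.count c :=
    (Multiset.toFinset_sum_count_eq T).symm
  have : ∃ c ∈ T.toFinset, Odd (T.count c) := by
    by_contra hall
    push_neg at hall
    have : Even (Multiset.card T) := by
      rw [hsum]
      exact Finset.even_sum _ (fun c hc => Nat.not_odd_iff_even.1 (hall c hc))
    exact (Nat.not_even_iff_odd.2 hodd) this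
  obtain ⟨c, hcT, hcodd⟩ := this
  have hcmem := Multiset.mem_toFinset.1 hcT
  have hcIoo : c ∈ Set.Ioo a b := (Multiset.mem_filter.1 hcmem).2
  refine ⟨c, hcIoo, ?_⟩
  have : T.count c = f.rootMultiplicity c := by
    rw [hT, Multiset.count_filter, if_pos hcIoo, count_roots]
  rwa [this] at hcodd

/-! ### Integration infrastructure -/

section Meas

variable {σ : Measure ℝ} [IsFiniteMeasure σ]

variable (σ) in
noncomputable def intg (Q : Polynomial ℝ) : ℝ := ∫ x, Q.eval x ∂σ

variable (h1 : ∀ᵐ x ∂σ, x ∈ Set.Icc (-1:ℝ) 1)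
include h1

lemma integrable_eval (Q : Polynomial ℝ) : Integrable (fun x => Q.eval x) σ := by
  obtain ⟨C, hC⟩ := (isCompact_Icc : IsCompact (Set.Icc (-1:ℝ) 1)).exists_bound_of_continuousOn
    Q.continuous.continuousOn
  exact (integrable_const C).mono' Q.continuous.aestronglyMeasurable
    (by filter_upwards [h1] with x hx using hC x hx)

lemma intg_add (Q R : Polynomial ℝ) : intg σ (Q + R) = intg σ Q + intg σ R := by
  unfold intg
  simp only [eval_add]
  exact integral_add (integrable_eval h1 Q) (integrable_eval h1 R)

lemma intg_smul (c : ℝ) (Q : Polynomial ℝ) : intg σ (c • Q) = c * intg σ Q := by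
  unfold intg; simp only [eval_smul, smul_eq_mul]; exact integral_const_mul c _

lemma intg_sum {ι : Type*} (s : Finset ι) (f : ι → Polynomial ℝ) :
    intg σ (∑ i ∈ s, f i) = ∑ i ∈ s, intg σ (f i) := by
  unfold intg
  simp only [eval_finset_sum]
  exact integral_finset_sum s fun i _ => integrable_eval h1 (f i)

lemma intg_sub (Q R : Polynomial ℝ) : intg σ (Q - R) = intg σ Q - intg σ R := by
  unfold intg
  simp only [eval_sub]
  exact integral_sub (integrable_eval h1 Q) (integrable_eval h1 R)

lemma intg_mono {Q R : Polynomial ℝ} (h : ∀ᵐ x ∂σ, Q.eval x ≤ R.eval x) :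
    intg σ Q ≤ intg σ R :=
  integral_mono_ae (integrable_eval h1 Q) (integrable_eval h1 R) h

lemma intg_abs_le {Q R : Polynomial ℝ} (h : ∀ᵐ x ∂σ, |Q.eval x| ≤ R.eval x) :
    |intg σ Q| ≤ intg σ R := by
  refine le_trans ?_ (integral_mono_ae (integrable_eval h1 Q).abs (integrable_eval h1 R) h)
  simpa [intg, Real.norm_eq_abs] using norm_integral_le_integral_norm (μ := σ) (fun x => Q.eval x)

omit h1 in
lemma intg_sq_nonneg (Q : Polynomial ℝ) : 0 ≤ intg σ (Q ^ 2) := by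
  unfold intg
  apply integral_nonneg
  intro x
  simp [eval_pow, sq_nonneg]

lemma mul_expand (Q R : Polynomial ℝ) :
    intg σ (Q * R) = ∑ l ∈ Finset.range (R.natDegree + 1), R.coeff l * intg σ (Q * X ^ l) := by
  have hrw : Q * R = ∑ l ∈ Finset.range (R.natDegree + 1), R.coeff l • (Q * X ^ l) := by
    conv_lhs => rw [R.as_sum_range]
    rw [Finset.mul_sum]
    refine Finset.sum_congr rfl fun i _ => ?_
    rw [← C_mul_X_pow_eq_monomial, smul_eq_C_mul]
    ring
  rw [hrw, intg_sum h1]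
  exact Finset.sum_congr rfl fun i _ => intg_smul h1 _ _

lemma intg_sq_pos (hinf : ∀ s : Finset ℝ, σ ((↑s : Set ℝ)ᶜ) ≠ 0)
    (Q : Polynomial ℝ) (hQ : Q ≠ 0) : 0 < intg σ (Q ^ 2) := by
  unfold intg
  rw [integral_pos_iff_support_of_nonneg_ae
    (by filter_upwards with x using by simp [eval_pow, sq_nonneg]) (integrable_eval h1 (Q^2))]
  have hsub : (↑Q.roots.toFinset : Set ℝ)ᶜ ⊆ Function.support fun x => (Q^2).eval x := by
    intro x hx
    simp only [Set.mem_compl_iff, Multiset.mem_toFinset, mem_roots hQ, Finset.mem_coe] at hx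
    simp only [Function.mem_support, eval_pow]
    intro h
    exact hx (by simpa [IsRoot, pow_eq_zero_iff] using h)
  calc (0:ENNReal) < σ ((↑Q.roots.toFinset : Set ℝ)ᶜ) :=
        lt_of_le_of_ne (zero_le') (Ne.symm (hinf Q.roots.toFinset))
    _ ≤ _ := measure_mono hsub

lemma vanish (hinf : ∀ s : Finset ℝ, σ ((↑s : Set ℝ)ᶜ) ≠ 0) (Q : Polynomial ℝ) (hQ : Q ≠ 0)
    (hpos : ∀ᵐ x ∂σ, 0 ≤ Q.eval x) (hzero : intg σ Q = 0) : False := by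
  have hae : (fun x => Q.eval x) =ᵐ[σ] 0 :=
    (integral_eq_zero_iff_of_nonneg_ae hpos (integrable_eval h1 Q)).1 hzero
  have hmem : ∀ᵐ x ∂σ, x ∈ (↑Q.roots.toFinset : Set ℝ) := by
    filter_upwards [hae] with x hx
    simp only [Finset.mem_coe, Multiset.mem_toFinset, mem_roots hQ]
    exact (by simpa using hx : Q.IsRoot x)
  rw [ae_iff] at hmem
  exact hinf Q.roots.toFinset (by convert hmem using 2; rfl)

/-! ### Orthogonal polynomial facts -/

variable {P : ℕ → Polynomial ℝ}
  (horth : ∀ j, ∀ i < j, ∫ x, (P j).eval x * x ^ i ∂σ = 0)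
include horth

lemma orth' (j : ℕ) (Q : Polynomial ℝ) (hQ : Q.degree < j) : intg σ (P j * Q) = 0 := by
  rcases eq_or_ne Q 0 with rfl | hQ0
  · simp [intg]
  have hlt : Q.natDegree < j := by
    rwa [natDegree_lt_iff_degree_lt hQ0]
  have hrw : P j * Q = ∑ i ∈ Finset.range (Q.natDegree + 1), Q.coeff i • (P j * X ^ i) := by
    conv_lhs => rw [Q.as_sum_range]
    rw [Finset.mul_sum]
    refine Finset.sum_congr rfl fun i _ => ?_
    rw [← C_mul_X_pow_eq_monomial, smul_eq_C_mul]
    ring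
  rw [hrw, intg_sum h1]
  refine Finset.sum_eq_zero fun i hi => ?_
  rw [intg_smul h1]
  have : intg σ (P j * X ^ i) = 0 := by
    unfold intg
    simp only [eval_mul, eval_pow, eval_X]
    exact horth j i (by simp only [Finset.mem_range] at hi; omega)
  rw [this, mul_zero]

variable (hmonic : ∀ j, (P j).Monic) (hdeg : ∀ j, (P j).natDegree = j)
include hmonic hdeg

lemma diff_deg_lt (i : ℕ) : (X ^ i - P i).degree < (i : WithBot ℕ) := by
  rcases eq_or_ne (X ^ i) (P i) with h | h
  · rw [h, sub_self]
    exact WithBot.bot_lt_coe i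
  · have h2 : (X ^ i : Polynomial ℝ).degree = (P i).degree := by
      rw [degree_X_pow, degree_eq_natDegree (hmonic i).ne_zero, hdeg i]
    calc (X ^ i - P i).degree < (X ^ i : Polynomial ℝ).degree :=
          degree_sub_lt h2 (pow_ne_zero i X_ne_zero)
            (by simp [leadingCoeff_X_pow, (hmonic i).leadingCoeff])
      _ = i := degree_X_pow i

lemma span_zero (hinf : ∀ s : Finset ℝ, σ ((↑s : Set ℝ)ᶜ) ≠ 0)
    (m : ℕ) (Q : Polynomial ℝ) (hQ : Q.natDegree ≤ m)
    (hv : ∀ k ≤ m, intg σ (P k * Q) = 0) : Q = 0 := by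
  have hmono : ∀ i, i ≤ m → intg σ (Q * X ^ i) = 0 := by
    intro i
    induction i using Nat.strong_induction_on with
    | _ i IH =>
      intro him
      have hsplit : Q * X ^ i = P i * Q + Q * (X ^ i - P i) := by ring
      have hR : intg σ (Q * (X ^ i - P i)) = 0 := by
        rw [mul_expand h1]
        refine Finset.sum_eq_zero fun l hl => ?_
        rcases eq_or_ne (X ^ i - P i) 0 with h0 | h0
        · simp [h0]
        have hl2 : l < i := by
          have := natDegree_lt_iff_degree_lt h0 |>.2 (diff_deg_lt h1 horth hmonic hdeg i)
          simp only [Finset.mem_range] at hl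
          omega
        rw [IH l hl2 (le_trans (le_of_lt hl2) him), mul_zero]
      have : intg σ (Q * X ^ i) = intg σ (P i * Q) + intg σ (Q * (X ^ i - P i)) := by
        rw [← intg_add h1, ← hsplit]
      rw [this, hv i him, hR, add_zero]
  by_contra hQ0
  have hpos := intg_sq_pos h1 hinf Q hQ0
  have : intg σ (Q ^ 2) = 0 := by
    rw [sq, mul_expand h1]
    refine Finset.sum_eq_zero fun l hl => ?_
    simp only [Finset.mem_range] at hl
    rw [hmono l (by omega), mul_zero]
  linarith

lemma roots_structure (hinf : ∀ s : Finset ℝ, σ ((↑s : Set ℝ)ᶜ) ≠ 0) (j : ℕ) :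
    (∀ z ∈ (P j).roots.toFinset, z ∈ Set.Ioo (-1:ℝ) 1) ∧
      (P j).roots.toFinset.card = j ∧ P j = ∏ z ∈ (P j).roots.toFinset, (X - C z) := by
  classical
  set f := P j with hfdef
  have hf0 : f ≠ 0 := (hmonic j).ne_zero
  set S₀ : Finset ℝ := f.roots.toFinset.filter
    (fun c => Odd (f.rootMultiplicity c) ∧ c ∈ Set.Ioo (-1:ℝ) 1) with hS₀
  have hjle : j ≤ S₀.card := by
    by_contra hlt
    push_neg at hlt
    set W : Polynomial ℝ := ∏ c ∈ S₀, (X - C c) with hWdef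
    have hWmonic : W.Monic := monic_prod_of_monic _ _ fun c _ => monic_X_sub_C c
    have hWdeg : W.natDegree = S₀.card := by
      rw [hWdef, natDegree_prod _ _ (fun c _ => X_sub_C_ne_zero c)]
      simp [natDegree_X_sub_C]
    have hWdegree : W.degree < (j : WithBot ℕ) := by
      rw [degree_eq_natDegree hWmonic.ne_zero, hWdeg]
      exact_mod_cast hlt
    have hint : intg σ (f * W) = 0 := orth' h1 horth j W hWdegree
    have hWroots : W.roots = S₀.val := roots_prod_X_sub_C S₀
    have hfW0 : f * W ≠ 0 := mul_ne_zero hf0 hWmonic.ne_zero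
    have hsgn : (∀ x ∈ Set.Icc (-1:ℝ) 1, 0 ≤ (f*W).eval x) ∨
        (∀ x ∈ Set.Icc (-1:ℝ) 1, (f*W).eval x ≤ 0) := by
      by_contra hcon
      push_neg at hcon
      obtain ⟨⟨x, hx, hxneg⟩, ⟨y, hy, hypos⟩⟩ := hcon
      have hkey : ∀ u v : ℝ, u ∈ Set.Icc (-1:ℝ) 1 → v ∈ Set.Icc (-1:ℝ) 1 → u < v →
          (f*W).eval u * (f*W).eval v < 0 → False := by
        intro u v hu hv huv hprodneg
        obtain ⟨c, hc, hodd⟩ := exists_odd_root (f*W) u v huv hprodneg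
        have hcIoo : c ∈ Set.Ioo (-1:ℝ) 1 := ⟨lt_of_le_of_lt hu.1 hc.1, lt_of_lt_of_le hc.2 hv.2⟩
        have hmulmult : (f*W).rootMultiplicity c
            = f.rootMultiplicity c + W.rootMultiplicity c := rootMultiplicity_mul hfW0
        have hWmult : W.rootMultiplicity c = if c ∈ S₀ then 1 else 0 := by
          rw [← count_roots, hWroots]
          by_cases hcS : c ∈ S₀
          · rw [if_pos hcS]
            exact Multiset.count_eq_one_of_mem S₀.nodup hcS
          · rw [if_neg hcS]
            exact Multiset.count_eq_zero.2 hcS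
        by_cases hcS : c ∈ S₀
        · have hoddf : Odd (f.rootMultiplicity c) := (Finset.mem_filter.1 hcS).2.1
          rw [hmulmult, hWmult, if_pos hcS] at hodd
          rcases hoddf with ⟨k, hk⟩
          rcases hodd with ⟨l, hl⟩
          omega
        · rw [hmulmult, hWmult, if_neg hcS, add_zero] at hodd
          have hroot : f.eval c = 0 := (rootMultiplicity_pos hf0).1 hodd.pos
          exact hcS (Finset.mem_filter.2
            ⟨Multiset.mem_toFinset.2 ((mem_roots hf0).2 hroot), hodd, hcIoo⟩)
      rcases lt_trichotomy x y with h | h | h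
      · exact hkey x y hx hy h (mul_neg_of_neg_of_pos hxneg hypos)
      · rw [h] at hxneg; linarith
      · exact hkey y x hy hx h (mul_neg_of_pos_of_neg hypos hxneg)
    rcases hsgn with hsp | hsn
    · exact vanish h1 hinf (f*W) hfW0 (by filter_upwards [h1] with x hx using hsp x hx) hint
    · refine vanish h1 hinf (-(f*W)) (neg_ne_zero.2 hfW0)
        (by filter_upwards [h1] with x hx; simpa using hsn x hx) ?_
      have hneg : intg σ (-(f*W)) = -intg σ (f*W) := by
        unfold intg
        simp only [eval_neg]
        exact integral_neg _
      rw [hneg, hint, neg_zero]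
  have h2 : S₀.card ≤ f.roots.toFinset.card := Finset.card_le_card (Finset.filter_subset _ _)
  have h3 : f.roots.toFinset.card ≤ Multiset.card f.roots := f.roots.toFinset_card_le
  have h4 : Multiset.card f.roots ≤ j := hdeg j ▸ f.card_roots'
  have hcard : f.roots.toFinset.card = j := le_antisymm (le_trans h3 h4) (le_trans hjle h2)
  have hcardroots : Multiset.card f.roots = j := le_antisymm h4 (hcard ▸ h3)
  have hnodup : f.roots.Nodup :=
    Multiset.toFinset_card_eq_card_iff_nodup.1 (by rw [hcard, hcardroots])
  have hprodm : (f.roots.map (fun a => X - C a)).prod = f :=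
    prod_multiset_X_sub_C_of_monic_of_roots_card_eq (hmonic j) (by rw [hcardroots, hdeg j])
  have hfin : f = ∏ z ∈ f.roots.toFinset, (X - C z) := by
    conv_rhs => rw [Finset.prod_eq_multiset_prod, Multiset.toFinset_val,
      Multiset.Nodup.dedup hnodup]
    exact hprodm.symm
  have hS0eq : S₀ = f.roots.toFinset :=
    Finset.eq_of_subset_of_card_le (Finset.filter_subset _ _) (by rw [hcard]; exact hjle)
  refine ⟨?_, hcard, hfin⟩
  intro z hz
  rw [← hS0eq] at hz
  exact (Finset.mem_filter.1 hz).2.2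


omit h1 horth hmonic hdeg in
lemma monic_sub_degree_lt {p q : Polynomial ℝ} (hp : p.Monic) (hq : q.Monic)
    (m : ℕ) (hpm : p.natDegree = m) (hqm : q.natDegree = m) :
    (p - q).degree < (m : WithBot ℕ) := by
  rcases eq_or_ne p q with rfl | h
  · rw [sub_self]; exact WithBot.bot_lt_coe m
  · have hdq : p.degree = q.degree := by
      rw [degree_eq_natDegree hp.ne_zero, degree_eq_natDegree hq.ne_zero, hpm, hqm]
    calc (p - q).degree < p.degree :=
          degree_sub_lt hdq hp.ne_zero (by rw [hp.leadingCoeff, hq.leadingCoeff])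
      _ = m := by rw [degree_eq_natDegree hp.ne_zero, hpm]

lemma ratio_bound (hinf : ∀ s : Finset ℝ, σ ((↑s : Set ℝ)ᶜ) ≠ 0)
    (δ : ℝ) (hδ : 0 < δ) (n : ℕ)
    (hnz : ∀ x ∈ Set.Icc (-δ) δ, (P (n+1)).eval x ≠ 0) :
    |(P n).eval 0| * δ ≤ |(P (n+1)).eval 0| := by
  classical
  obtain ⟨hIoo, hcard, hfact⟩ := roots_structure h1 horth hmonic hdeg hinf (n+1)
  set S : Finset ℝ := (P (n+1)).roots.toFinset with hSdef
  have hzS : ∀ z ∈ S, δ < |z| := by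
    intro z hz
    have hroot : (P (n+1)).eval z = 0 :=
      (mem_roots (hmonic (n+1)).ne_zero).1 (Multiset.mem_toFinset.1 hz)
    by_contra hle
    push_neg at hle
    exact hnz z (abs_le.1 hle) hroot
  have hz0 : ∀ z ∈ S, z ≠ 0 := fun z hz h0 => by
    have := hzS z hz; rw [h0, abs_zero] at this; linarith
  set Qp : ℝ → Polynomial ℝ := fun z => ∏ c ∈ S.erase z, (X - C c) with hQp
  have hQpmonic : ∀ z, (Qp z).Monic := fun z => monic_prod_of_monic _ _ fun c _ => monic_X_sub_C c
  have hQpdeg : ∀ z ∈ S, (Qp z).natDegree = n := by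
    intro z hz
    rw [hQp, natDegree_prod _ _ (fun c _ => X_sub_C_ne_zero c)]
    simp only [natDegree_X_sub_C, Finset.sum_const, smul_eq_mul, mul_one]
    rw [Finset.card_erase_of_mem hz, hcard]
    omega
  have hk1 : ∀ z ∈ S, (X - C z) * Qp z = P (n+1) := by
    intro z hz
    simp only [hQp]
    rw [hfact]
    exact Finset.mul_prod_erase S (fun c => X - C c) hz
  have hQpz : ∀ z ∈ S, (Qp z).eval z ≠ 0 := by
    intro z hz
    rw [hQp, eval_prod]
    apply Finset.prod_ne_zero_iff.2
    intro c hc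
    simp only [eval_sub, eval_X, eval_C, sub_ne_zero]
    exact (Finset.ne_of_mem_erase hc).symm
  -- orthogonality of distinct Qp
  have hk4 : ∀ z ∈ S, ∀ z' ∈ S, z ≠ z' → intg σ (Qp z * Qp z') = 0 := by
    intro z hz z' hz' hne
    have hzmem : z ∈ S.erase z' := Finset.mem_erase.2 ⟨hne, hz⟩
    set R : Polynomial ℝ := ∏ c ∈ (S.erase z').erase z, (X - C c) with hR
    have hsplit : Qp z' = (X - C z) * R := by
      simp only [hQp, hR]
      exact (Finset.mul_prod_erase _ (fun c => X - C c) hzmem).symm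
    have hmul : Qp z * Qp z' = P (n+1) * R := by
      rw [hsplit, ← mul_assoc, mul_comm (Qp z) (X - C z), hk1 z hz]
    have hRmonic : R.Monic := monic_prod_of_monic _ _ fun c _ => monic_X_sub_C c
    have hRdeg : R.natDegree < n + 1 := by
      rw [hR, natDegree_prod _ _ (fun c _ => X_sub_C_ne_zero c)]
      simp only [natDegree_X_sub_C, Finset.sum_const, smul_eq_mul, mul_one]
      rw [Finset.card_erase_of_mem hzmem, Finset.card_erase_of_mem hz', hcard]
      omega
    rw [hmul]
    apply orth' h1 horth
    rw [degree_eq_natDegree hRmonic.ne_zero]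
    exact_mod_cast hRdeg
  have hk5 : ∀ z ∈ S, intg σ (P n * Qp z) = intg σ (P n ^ 2) := by
    intro z hz
    have hid : P n * Qp z = P n ^ 2 + P n * (Qp z - P n) := by ring
    have hz2 : intg σ (P n * (Qp z - P n)) = 0 := by
      apply orth' h1 horth
      exact monic_sub_degree_lt (hQpmonic z) (hmonic n) n (hQpdeg z hz) (hdeg n)
    rw [hid, intg_add h1, hz2, add_zero]
  -- interpolation
  set c : ℝ → ℝ := fun z => (P n).eval z / (Qp z).eval z with hc
  have hinterp : P n = ∑ z ∈ S, c z • Qp z := by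
    have hG : P n - ∑ z ∈ S, c z • Qp z = 0 := by
      set G := P n - ∑ z ∈ S, c z • Qp z with hGdef
      by_contra hG0
      have hGroot : ∀ z ∈ S, G.eval z = 0 := by
        intro z hz
        rw [hGdef]
        simp only [eval_sub, eval_finset_sum, eval_smul, smul_eq_mul]
        rw [Finset.sum_eq_single z]
        · rw [hc]
          simp only []
          rw [div_mul_cancel₀ _ (hQpz z hz), sub_self]
        · intro z' hz' hne
          have : (Qp z').eval z = 0 := by
            rw [hQp, eval_prod]
            apply Finset.prod_eq_zero (Finset.mem_erase.2 ⟨(Ne.symm hne), hz⟩)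
            simp
          rw [this, mul_zero]
        · intro h; exact absurd hz h
      have hGdeg : G.natDegree ≤ n := by
        apply le_trans (natDegree_sub_le _ _)
        apply max_le (by rw [hdeg n])
        apply Polynomial.natDegree_sum_le_of_forall_le
        intro z hz
        exact le_trans (natDegree_smul_le _ _) (le_of_eq (hQpdeg z hz))
      have hle : S.val ≤ G.roots := by
        rw [Multiset.le_iff_count]
        intro a
        by_cases ha : a ∈ S
        · have h1' : S.val.count a = 1 := Multiset.count_eq_one_of_mem S.nodup ha
          rw [h1']
          rw [Multiset.one_le_count_iff_mem, mem_roots hG0]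
          exact hGroot a ha
        · rw [Multiset.count_eq_zero.2 (fun h => ha h)]
          omega
      have : n + 1 ≤ G.natDegree := by
        calc n + 1 = S.card := hcard.symm
          _ ≤ Multiset.card G.roots := Multiset.card_le_card hle
          _ ≤ G.natDegree := G.card_roots'
      omega
    exact sub_eq_zero.1 hG
  have hPpos : 0 < intg σ (P n ^ 2) := intg_sq_pos h1 hinf _ (hmonic n).ne_zero
  have hk8 : ∀ z ∈ S, c z * intg σ (Qp z ^ 2) = intg σ (P n ^ 2) := by
    intro z hz
    have hexp : P n * Qp z = ∑ z' ∈ S, c z' • (Qp z' * Qp z) := by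
      conv_lhs => rw [hinterp]
      rw [Finset.sum_mul]
      exact Finset.sum_congr rfl fun z' _ => smul_mul_assoc _ _ _
    have hthis : intg σ (P n * Qp z) = ∑ z' ∈ S, c z' * intg σ (Qp z' * Qp z) := by
      rw [hexp, intg_sum h1]
      exact Finset.sum_congr rfl fun z' _ => intg_smul h1 _ _
    rw [hk5 z hz] at hthis
    rw [Finset.sum_eq_single z] at hthis
    · rw [show Qp z ^ 2 = Qp z * Qp z from sq (Qp z)]
      exact hthis.symm
    · intro z' hz' hne
      rw [hk4 z' hz' z hz hne, mul_zero]
    · intro h; exact absurd hz h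
  have hQpos : ∀ z ∈ S, 0 < intg σ (Qp z ^ 2) := fun z hz =>
    intg_sq_pos h1 hinf _ (hQpmonic z).ne_zero
  have hcpos : ∀ z ∈ S, 0 < c z := by
    intro z hz
    have h8 := hk8 z hz
    have hq := hQpos z hz
    nlinarith
  have hsum1 : ∑ z ∈ S, c z = 1 := by
    have hPn2 : P n * P n = ∑ z ∈ S, c z • (P n * Qp z) := by
      calc P n * P n = P n * ∑ z ∈ S, c z • Qp z := by rw [← hinterp]
        _ = ∑ z ∈ S, c z • (P n * Qp z) := by
            rw [Finset.mul_sum]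
            exact Finset.sum_congr rfl fun z _ => mul_smul_comm _ _ _
    have hcalc : intg σ (P n ^ 2) = (∑ z ∈ S, c z) * intg σ (P n ^ 2) := by
      conv_lhs => rw [sq, hPn2]
      rw [intg_sum h1, Finset.sum_mul]
      refine Finset.sum_congr rfl fun z hz => ?_
      rw [intg_smul h1, hk5 z hz]
    have := hcalc.symm
    exact mul_right_cancel₀ (ne_of_gt hPpos) (by linarith)
  -- evaluation at 0
  have hQp0 : ∀ z ∈ S, |(Qp z).eval 0| = |(P (n+1)).eval 0| / |z| := by
    intro z hz
    have he := congrArg (fun q => |Polynomial.eval 0 q|) (hk1 z hz)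
    simp only [eval_mul, eval_sub, eval_X, eval_C, zero_sub, abs_mul, abs_neg] at he
    rw [eq_div_iff (abs_ne_zero.2 (hz0 z hz))]
    · rw [← he, mul_comm]
  have heval : (P n).eval 0 = ∑ z ∈ S, c z * (Qp z).eval 0 := by
    conv_lhs => rw [hinterp]
    simp [eval_finset_sum, eval_smul]
  have hbound : |(P n).eval 0| ≤ |(P (n+1)).eval 0| / δ := by
    rw [heval]
    calc |∑ z ∈ S, c z * (Qp z).eval 0| ≤ ∑ z ∈ S, |c z * (Qp z).eval 0| :=
          Finset.abs_sum_le_sum_abs _ _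
      _ ≤ ∑ z ∈ S, c z * (|(P (n+1)).eval 0| / δ) := by
          refine Finset.sum_le_sum fun z hz => ?_
          rw [abs_mul, abs_of_pos (hcpos z hz), hQp0 z hz]
          refine mul_le_mul_of_nonneg_left ?_ (hcpos z hz).le
          gcongr
          exact (hzS z hz).le
      _ = |(P (n+1)).eval 0| / δ := by rw [← Finset.sum_mul, hsum1, one_mul]
  rw [← le_div_iff₀ hδ] at *
  exact hbound


lemma recurrence (hinf : ∀ s : Finset ℝ, σ ((↑s : Set ℝ)ᶜ) ≠ 0) (n : ℕ) :
    ∃ d e : ℝ, |d| ≤ 1 ∧ 0 < e ∧ e ≤ 1 ∧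
      (P (n+2)).eval 0 = -d * (P (n+1)).eval 0 - e * (P n).eval 0 := by
  have hA : 0 < intg σ (P (n+1) ^ 2) := intg_sq_pos h1 hinf _ (hmonic (n+1)).ne_zero
  have hB : 0 < intg σ (P n ^ 2) := intg_sq_pos h1 hinf _ (hmonic n).ne_zero
  set A := intg σ (P (n+1) ^ 2) with hAdef
  set B := intg σ (P n ^ 2) with hBdef
  set d : ℝ := intg σ (X * P (n+1) ^ 2) / A with hd
  set e : ℝ := A / B with he
  -- monic products with X
  have hXP : ∀ m : ℕ, (X * P m).Monic := fun m => monic_X.mul (hmonic m)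
  have hXPdeg : ∀ m : ℕ, (X * P m).natDegree = m + 1 := by
    intro m
    rw [natDegree_mul X_ne_zero (hmonic m).ne_zero, natDegree_X, hdeg m]
    omega
  -- key inner products
  have hXPn1 : ∀ m : ℕ, intg σ (P (m+1) * (X * P m)) = intg σ (P (m+1) ^ 2) := by
    intro m
    have hid : P (m+1) * (X * P m) = P (m+1) ^ 2 + P (m+1) * (X * P m - P (m+1)) := by ring
    have hz : intg σ (P (m+1) * (X * P m - P (m+1))) = 0 := by
      apply orth' h1 horth
      exact monic_sub_degree_lt (hXP m) (hmonic (m+1)) (m+1) (hXPdeg m) (hdeg (m+1))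
    rw [hid, intg_add h1, hz, add_zero]
  -- bound for d
  have hdnum : |intg σ (X * P (n+1) ^ 2)| ≤ A := by
    rw [hAdef]
    apply intg_abs_le h1
    filter_upwards [h1] with x hx
    have hx1 : |x| ≤ 1 := abs_le.2 ⟨hx.1, hx.2⟩
    simp only [eval_mul, eval_pow, eval_X, abs_mul, abs_pow, sq_abs]
    nlinarith [sq_nonneg ((P (n+1)).eval x), abs_nonneg x]
  have hdabs : |d| ≤ 1 := by
    rw [hd, abs_div, abs_of_pos hA]
    exact div_le_one_of_le₀ hdnum hA.le
  -- A ≤ B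
  have hAB : A ≤ B := by
    have hid : (X * P n) * (X * P n) = P (n+1) ^ 2
        + (P (n+1) * (X * P n - P (n+1)) + P (n+1) * (X * P n - P (n+1)))
        + (X * P n - P (n+1)) ^ 2 := by ring
    have hz : intg σ (P (n+1) * (X * P n - P (n+1))) = 0 := by
      apply orth' h1 horth
      exact monic_sub_degree_lt (hXP n) (hmonic (n+1)) (n+1) (hXPdeg n) (hdeg (n+1))
    have h2 : intg σ ((X * P n) * (X * P n)) = A + intg σ ((X * P n - P (n+1)) ^ 2) := by
      rw [hid, intg_add h1, intg_add h1, intg_add h1, hz, add_zero, add_zero, hAdef]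
    have h3 : A ≤ intg σ ((X * P n) * (X * P n)) := by
      rw [h2]
      linarith [intg_sq_nonneg (σ := σ) (X * P n - P (n+1))]
    refine le_trans h3 ?_
    rw [hBdef]
    apply intg_mono h1
    filter_upwards [h1] with x hx
    have hx1 : |x| ≤ 1 := abs_le.2 ⟨hx.1, hx.2⟩
    have hx2 : x ^ 2 ≤ 1 := by nlinarith [abs_nonneg x, sq_abs x]
    simp only [eval_mul, eval_pow, eval_X]
    nlinarith [sq_nonneg ((P n).eval x), hx2]
  have hepos : 0 < e := div_pos hA hB
  have hele : e ≤ 1 := div_le_one_of_le₀ hAB hB.le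
  -- the remainder is zero
  set E : Polynomial ℝ := X * P (n+1) - P (n+2) - d • P (n+1) - e • P n with hE
  have hEdeg : E.natDegree ≤ n + 2 := by
    rw [hE]
    refine le_trans (natDegree_sub_le _ _) (max_le (le_trans (natDegree_sub_le _ _)
      (max_le (le_trans (natDegree_sub_le _ _) (max_le ?_ ?_)) ?_)) ?_)
    · rw [hXPdeg (n+1)]
    · rw [hdeg (n+2)]
    · exact le_trans (natDegree_smul_le _ _) (by rw [hdeg (n+1)]; omega)
    · exact le_trans (natDegree_smul_le _ _) (by rw [hdeg n]; omega)
  have hEzero : E = 0 := by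
    apply span_zero h1 horth hmonic hdeg hinf (n+2) E hEdeg
    intro k hk
    have hsplit : P k * E = P k * (X * P (n+1)) - P k * P (n+2)
        - d • (P k * P (n+1)) - e • (P k * P n) := by
      rw [hE]; simp only [mul_sub, mul_smul_comm]
    rw [hsplit, intg_sub h1, intg_sub h1, intg_sub h1, intg_smul h1, intg_smul h1]
    rcases lt_trichotomy k n with hkn | hkn | hkn
    · -- k < n : all terms vanish
      have t1 : intg σ (P k * (X * P (n+1))) = 0 := by
        rw [show P k * (X * P (n+1)) = P (n+1) * (X * P k) by ring]
        apply orth' h1 horth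
        rw [degree_eq_natDegree (hXP k).ne_zero, hXPdeg k]
        exact_mod_cast by omega
      have t2 : intg σ (P k * P (n+2)) = 0 := by
        rw [mul_comm]
        apply orth' h1 horth
        rw [degree_eq_natDegree (hmonic k).ne_zero, hdeg k]
        exact_mod_cast by omega
      have t3 : intg σ (P k * P (n+1)) = 0 := by
        rw [mul_comm]
        apply orth' h1 horth
        rw [degree_eq_natDegree (hmonic k).ne_zero, hdeg k]
        exact_mod_cast by omega
      have t4 : intg σ (P k * P n) = 0 := by
        rw [mul_comm]
        apply orth' h1 horth
        rw [degree_eq_natDegree (hmonic k).ne_zero, hdeg k]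
        exact_mod_cast by omega
      rw [t1, t2, t3, t4]
      ring
    · -- k = n
      subst hkn
      have t1 : intg σ (P k * (X * P (k+1))) = intg σ (P (k+1) ^ 2) := by
        rw [show P k * (X * P (k+1)) = P (k+1) * (X * P k) by ring]
        exact hXPn1 k
      have t2 : intg σ (P k * P (k+2)) = 0 := by
        rw [mul_comm]
        apply orth' h1 horth
        rw [degree_eq_natDegree (hmonic k).ne_zero, hdeg k]
        exact_mod_cast by omega
      have t3 : intg σ (P k * P (k+1)) = 0 := by
        rw [mul_comm]
        apply orth' h1 horth
        rw [degree_eq_natDegree (hmonic k).ne_zero, hdeg k]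
        exact_mod_cast by omega
      have t4 : intg σ (P k * P k) = B := by rw [hBdef, sq]
      rw [t1, t2, t3, t4, ← hAdef, he]
      field_simp; ring
    · -- k = n+1 or k = n+2
      have hk12 : k = n+1 ∨ k = n+2 := by omega
      rcases hk12 with rfl | rfl
      · -- k = n+1
        have t1 : intg σ (P (n+1) * (X * P (n+1))) = d * A := by
          rw [show P (n+1) * (X * P (n+1)) = X * P (n+1) ^ 2 by ring, hd]
          field_simp
        have t2 : intg σ (P (n+1) * P (n+2)) = 0 := by
          rw [mul_comm]
          apply orth' h1 horth
          rw [degree_eq_natDegree (hmonic (n+1)).ne_zero, hdeg (n+1)]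
          exact_mod_cast by omega
        have t3 : intg σ (P (n+1) * P (n+1)) = A := by rw [hAdef, sq]
        have t4 : intg σ (P (n+1) * P n) = 0 := by
          apply orth' h1 horth
          rw [degree_eq_natDegree (hmonic n).ne_zero, hdeg n]
          exact_mod_cast by omega
        rw [t1, t2, t3, t4]
        ring
      · -- k = n+2
        have t1 : intg σ (P (n+2) * (X * P (n+1))) = intg σ (P (n+2) ^ 2) := hXPn1 (n+1)
        have t2 : intg σ (P (n+2) * P (n+2)) = intg σ (P (n+2) ^ 2) := by rw [sq]
        have t3 : intg σ (P (n+2) * P (n+1)) = 0 := by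
          apply orth' h1 horth
          rw [degree_eq_natDegree (hmonic (n+1)).ne_zero, hdeg (n+1)]
          exact_mod_cast by omega
        have t4 : intg σ (P (n+2) * P n) = 0 := by
          apply orth' h1 horth
          rw [degree_eq_natDegree (hmonic n).ne_zero, hdeg n]
          exact_mod_cast by omega
        rw [t1, t2, t3, t4]
        ring
  refine ⟨d, e, hdabs, hepos, hele, ?_⟩
  have := congrArg (fun q => Polynomial.eval 0 q) hEzero
  simp only [hE, eval_sub, eval_mul, eval_smul, eval_X, zero_mul, eval_zero,
    smul_eq_mul] at this
  linarith

lemma recurrence0 (hinf : ∀ s : Finset ℝ, σ ((↑s : Set ℝ)ᶜ) ≠ 0) :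
    ∃ d : ℝ, |d| ≤ 1 ∧ (P 1).eval 0 = -d * (P 0).eval 0 := by
  have hA : 0 < intg σ (P 0 ^ 2) := intg_sq_pos h1 hinf _ (hmonic 0).ne_zero
  set A := intg σ (P 0 ^ 2) with hAdef
  set d : ℝ := intg σ (X * P 0 ^ 2) / A with hd
  have hXP : (X * P 0).Monic := monic_X.mul (hmonic 0)
  have hXPdeg : (X * P 0).natDegree = 1 := by
    rw [natDegree_mul X_ne_zero (hmonic 0).ne_zero, natDegree_X, hdeg 0]
  have hdnum : |intg σ (X * P 0 ^ 2)| ≤ A := by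
    rw [hAdef]
    apply intg_abs_le h1
    filter_upwards [h1] with x hx
    have hx1 : |x| ≤ 1 := abs_le.2 ⟨hx.1, hx.2⟩
    simp only [eval_mul, eval_pow, eval_X, abs_mul, abs_pow, sq_abs]
    nlinarith [sq_nonneg ((P 0).eval x), abs_nonneg x]
  have hdabs : |d| ≤ 1 := by
    rw [hd, abs_div, abs_of_pos hA]
    exact div_le_one_of_le₀ hdnum hA.le
  set E : Polynomial ℝ := X * P 0 - P 1 - d • P 0 with hE
  have hEdeg : E.natDegree ≤ 1 := by
    rw [hE]
    refine le_trans (natDegree_sub_le _ _) (max_le (le_trans (natDegree_sub_le _ _)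
      (max_le ?_ ?_)) ?_)
    · rw [hXPdeg]
    · rw [hdeg 1]
    · exact le_trans (natDegree_smul_le _ _) (by rw [hdeg 0]; omega)
  have hXP01 : intg σ (P 1 * (X * P 0)) = intg σ (P 1 ^ 2) := by
    have hid : P 1 * (X * P 0) = P 1 ^ 2 + P 1 * (X * P 0 - P 1) := by ring
    have hz : intg σ (P 1 * (X * P 0 - P 1)) = 0 := by
      apply orth' h1 horth
      exact monic_sub_degree_lt hXP (hmonic 1) 1 hXPdeg (hdeg 1)
    rw [hid, intg_add h1, hz, add_zero]
  have hEzero : E = 0 := by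
    apply span_zero h1 horth hmonic hdeg hinf 1 E hEdeg
    intro k hk
    have hsplit : P k * E = P k * (X * P 0) - P k * P 1 - d • (P k * P 0) := by
      rw [hE]; simp only [mul_sub, mul_smul_comm]
    rw [hsplit, intg_sub h1, intg_sub h1, intg_smul h1]
    interval_cases k
    · have t1 : intg σ (P 0 * (X * P 0)) = intg σ (X * P 0 ^ 2) := by
        rw [show P 0 * (X * P 0) = X * P 0 ^ 2 by ring]
      have t2 : intg σ (P 0 * P 1) = 0 := by
        rw [mul_comm]
        apply orth' h1 horth
        rw [degree_eq_natDegree (hmonic 0).ne_zero, hdeg 0]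
        exact_mod_cast by omega
      have t3 : intg σ (P 0 * P 0) = A := by rw [hAdef, sq]
      rw [t1, t2, t3, hd]
      field_simp; ring
    · have t2 : intg σ (P 1 * P 1) = intg σ (P 1 ^ 2) := by rw [sq]
      have t3 : intg σ (P 1 * P 0) = 0 := by
        apply orth' h1 horth
        rw [degree_eq_natDegree (hmonic 0).ne_zero, hdeg 0]
        exact_mod_cast by omega
      rw [hXP01, t2, t3]
      ring
  refine ⟨d, hdabs, ?_⟩
  have := congrArg (fun q => Polynomial.eval 0 q) hEzero
  simp only [hE, eval_sub, eval_mul, eval_smul, eval_X, zero_mul, eval_zero,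
    smul_eq_mul] at this
  linarith

lemma step_bound (hinf : ∀ s : Finset ℝ, σ ((↑s : Set ℝ)ᶜ) ≠ 0)
    (δ : ℝ) (hδ : 0 < δ) (j : ℕ)
    (hnz : ∀ x ∈ Set.Icc (-δ) δ, (P j).eval x ≠ 0) :
    |(P (j+1)).eval 0| ≤ (1 + 1/δ) * |(P j).eval 0| := by
  match j with
  | 0 =>
    obtain ⟨d, hdabs, heq⟩ := recurrence0 h1 horth hmonic hdeg hinf
    rw [heq, abs_mul, abs_neg]
    have h1δ : (1:ℝ) ≤ 1 + 1/δ := by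
      have : 0 < 1/δ := by positivity
      linarith
    nlinarith [abs_nonneg ((P 0).eval 0)]
  | (m+1) =>
    obtain ⟨d, e, hdabs, hepos, hele, heq⟩ := recurrence h1 horth hmonic hdeg hinf m
    have hrb : |(P m).eval 0| * δ ≤ |(P (m+1)).eval 0| :=
      ratio_bound h1 horth hmonic hdeg hinf δ hδ m hnz
    rw [heq]
    have habs : |-d * (P (m+1)).eval 0 - e * (P m).eval 0|
        ≤ |d| * |(P (m+1)).eval 0| + e * |(P m).eval 0| := by
      refine le_trans (abs_sub _ _) ?_
      rw [abs_mul, abs_mul, abs_neg, abs_of_pos hepos]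
    refine le_trans habs ?_
    have h2 : e * |(P m).eval 0| ≤ |(P (m+1)).eval 0| / δ := by
      have h3 : |(P m).eval 0| ≤ |(P (m+1)).eval 0| / δ := by
        rw [le_div_iff₀ hδ]
        exact hrb
      calc e * |(P m).eval 0| ≤ 1 * |(P m).eval 0| :=
            mul_le_mul_of_nonneg_right hele (abs_nonneg _)
        _ = |(P m).eval 0| := one_mul _
        _ ≤ |(P (m+1)).eval 0| / δ := h3
    have h4 : |d| * |(P (m+1)).eval 0| ≤ |(P (m+1)).eval 0| :=
      by nlinarith [abs_nonneg ((P (m+1)).eval 0)]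
    have h5 : |(P (m+1)).eval 0| / δ = (1/δ) * |(P (m+1)).eval 0| := by ring
    rw [add_mul, one_mul]
    rw [h5] at h2
    linarith

end Meas

end RatioAux

open RatioAux in
/-- Let `σ` be a finite measure with infinite support contained in
`[-1,α] ∪ [β,1]`, `α < 0 < β`, and `P̂_j` its monic orthogonal polynomials.
If for a subsequence `(j_k)` the polynomials `P̂_{j_k}` have no zeros in a
fixed interval `[-δ,δ] ⊂ (α,β)`, then the sequence
`(P̂_{j_k+1}(0)/P̂_{j_k}(0))` is bounded. -/
theorem ratio_bounded_of_no_zeros_near_zero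
    (α β : ℝ) (hα : α < 0) (hβ : 0 < β)
    (σ : Measure ℝ) [IsFiniteMeasure σ]
    (hsupp : σ ((Set.Icc (-1) α ∪ Set.Icc β 1)ᶜ) = 0)
    (hinf : ∀ s : Finset ℝ, σ ((↑s : Set ℝ)ᶜ) ≠ 0)
    (P : ℕ → Polynomial ℝ)
    (hmonic : ∀ j, (P j).Monic) (hdeg : ∀ j, (P j).natDegree = j)
    (horth : ∀ j, ∀ i < j, ∫ x, (P j).eval x * x ^ i ∂σ = 0)
    (δ : ℝ) (hδ : 0 < δ) (hδα : α < -δ) (hδβ : δ < β)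
    (jk : ℕ → ℕ) (hjk : StrictMono jk)
    (hnozero : ∀ n, ∀ x ∈ Set.Icc (-δ) δ, (P (jk n)).eval x ≠ 0) :
    ∃ M : ℝ, ∀ n, |(P (jk n + 1)).eval 0 / (P (jk n)).eval 0| ≤ M := by
  have h1 : ∀ᵐ x ∂σ, x ∈ Set.Icc (-1:ℝ) 1 := by
    have h : ∀ᵐ x ∂σ, x ∈ (Set.Icc (-1) α ∪ Set.Icc β 1) := by
      rw [ae_iff]
      convert hsupp using 2; rfl
    filter_upwards [h] with x hx
    rcases hx with h | h
    · exact ⟨h.1, by linarith [h.2]⟩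
    · exact ⟨by linarith [h.1], h.2⟩
  refine ⟨1 + 1/δ, fun n => ?_⟩
  have hstep := step_bound h1 horth hmonic hdeg hinf δ hδ (jk n) (hnozero n)
  have h0 : (P (jk n)).eval 0 ≠ 0 := hnozero n 0 ⟨by linarith, by linarith⟩
  rw [abs_div, div_le_iff₀ (abs_pos.2 h0)]
  exact hstep
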